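/- If a hypergraph H contains a subhypergraph H' belonging to the family F_k, then Maker, moving first, can win the Maker-Breaker game on H in at most k of his moves: w_M^M(H) ≤ k. -/

import Mathlib

open scoped Classical

open scoped Classical

noncomputable section

/-- Minimax value of the Maker–Breaker game on hypergraph with edge set `E`:
`mbVal E t M B` is the minimum number of further moves Maker needs to claim all
vertices of some hyperedge (Maker has claimed `M`, Breaker has claimed `B`,
`t = true` iff Maker moves next), under optimal play; `⊤` if Maker cannot win. -/
def mbVal {V : Type} [Fintype V] (E : Set (Finset V)) :
    Bool → Finset V → Finset V → ℕ∞
  | true, M, B =>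
      if ∃ e ∈ E, e ⊆ M then 0
      else ⨅ v ∈ Finset.univ \ (M ∪ B), (1 + mbVal E false (insert v M) B)
  | false, M, B =>
      if ∃ e ∈ E, e ⊆ M then 0
      else if Finset.univ \ (M ∪ B) = ∅ then ⊤
      else ⨆ v ∈ Finset.univ \ (M ∪ B), mbVal E true M (insert v B)
termination_by _t M B => (Finset.univ \ (M ∪ B)).card
decreasing_by
  all_goals
    apply Finset.card_lt_card
    rw [Finset.ssubset_iff_of_subset]
    · refine ⟨v, ‹_›, by simp⟩
    · intro x hx
      simp only [Finset.mem_sdiff, Finset.mem_univ, true_and, Finset.mem_union,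
        Finset.mem_insert] at hx ⊢
      tauto

/-- The closed neighborhood of `v` as a finset. -/
def closedNbhdFinset {V : Type} [Fintype V] (G : SimpleGraph V) (v : V) : Finset V :=
  Finset.univ.filter (fun w => w = v ∨ G.Adj v w)

/-- The closed neighborhood hypergraph of a graph. -/
def nbhdHyp {V : Type} [Fintype V] (G : SimpleGraph V) : Set (Finset V) :=
  Set.range (closedNbhdFinset G)

/-- `γ'_SMB(G)`: the number of moves Staller (= Maker on the closed neighborhood
hypergraph, moving first) needs to win the Maker–Breaker domination game on `G`. -/
def gammaSMB' {V : Type} [Fintype V] (G : SimpleGraph V) : ℕ∞ :=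
  mbVal (nbhdHyp G) true ∅ ∅

end


/-- `FStar k VS E` says that the hypergraph with vertex set `VS` and hyperedge
set `E` is a member of the family `F_k^*`: `F_1^*` consists of the hypergraph
with one vertex `x` and one edge `{x}`; for `k ≥ 2`, a member of `F_k^*` is
obtained from disjoint members `A₁ ∈ F_{k-1}^*` and `A₂ ∈ ∪_{i<k} F_i^*` by
choosing edges `e₁ ∈ E(A₁)`, `e₂ ∈ E(A₂)`, adding a new origin vertex `u` and
replacing `eᵢ` by `eᵢ ∪ {u}`. -/
def FStar {V : Type} : ℕ → Set V → Set (Finset V) → Prop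
  | 0, _, _ => False
  | 1, VS, E => ∃ x : V, VS = {x} ∧ E = {{x}}
  | (k+2), VS, E => ∃ (u : V) (A B : Set V) (EA EB : Set (Finset V))
      (e₁ e₂ : Finset V),
      u ∈ VS ∧ A ∪ B = VS \ {u} ∧ Disjoint A B ∧
      (∀ e ∈ EA, ↑e ⊆ A) ∧ (∀ e ∈ EB, ↑e ⊆ B) ∧
      e₁ ∈ EA ∧ e₂ ∈ EB ∧
      FStar (k+1) A EA ∧
      (∃ i, ∃ _ : 1 ≤ i ∧ i ≤ k + 1, FStar i B EB) ∧
      E = (EA \ {e₁}) ∪ (EB \ {e₂}) ∪ {insert u e₁, insert u e₂}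
termination_by k _ _ => k
decreasing_by all_goals omega

/-- The hypergraph with vertex set `VS` and edge set `E` is a member of the
family `F_k = F_k^* \ (F_1 ∪ ⋯ ∪ F_{k-1})`. -/
def FFamilyAt (k : ℕ) {V : Type} (VS : Set V) (E : Set (Finset V)) : Prop :=
  FStar k VS E ∧ ∀ i < k, ¬ FStar i VS E

section Aux

lemma FStar_nonempty {V : Type} : ∀ {k : ℕ} {VS : Set V} {E' : Set (Finset V)},
    FStar k VS E' → VS.Nonempty
  | 0, _, _, h => absurd h (by rw [FStar]; exact id)
  | 1, _, _, h => by
      rw [FStar] at h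
      obtain ⟨x, hVS, -⟩ := h
      exact ⟨x, hVS ▸ rfl⟩
  | (k+2), _, _, h => by
      rw [FStar] at h
      obtain ⟨u, _, _, _, _, _, _, hu, -⟩ := h
      exact ⟨u, hu⟩

lemma mbVal_le_of_FStar {V : Type} [Fintype V] (E : Set (Finset V)) :
    ∀ k (VS : Set V) (E' : Set (Finset V)) (M B : Finset V),
      FStar k VS E' →
      (∀ v ∈ VS, v ∉ M ∧ v ∉ B) →
      (∀ e ∈ E', ∃ f ∈ E, f \ M ⊆ e) →
      mbVal E true M B ≤ (k : ℕ∞) := by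
  intro k
  induction k using Nat.strong_induction_on with
  | _ k IH =>
  match k with
  | 0 =>
    intro VS E' M B h _ _
    exact absurd h (by rw [FStar]; exact id)
  | 1 =>
    intro VS E' M B h hfree hedge
    rw [FStar] at h
    obtain ⟨x, hVS, hE'⟩ := h
    obtain ⟨f, hfE, hfsub⟩ := hedge {x} (by rw [hE']; rfl)
    have hx := hfree x (by rw [hVS]; rfl)
    rw [mbVal]
    split
    · exact zero_le
    · refine le_trans (iInf₂_le x ?_) ?_
      · simp [hx.1, hx.2]
      · have h0 : mbVal E false (insert x M) B = 0 := by
          rw [mbVal, if_pos]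
          refine ⟨f, hfE, fun a ha => ?_⟩
          by_cases haM : a ∈ M
          · exact Finset.mem_insert_of_mem haM
          · have := hfsub (Finset.mem_sdiff.2 ⟨ha, haM⟩)
            simp only [Finset.mem_singleton] at this
            simp [this]
        rw [h0]
        norm_num
  | (k+2) =>
    intro VS E' M B hF hfree hedge
    rw [FStar] at hF
    obtain ⟨u, A, Bs, EA, EB, e₁, e₂, huVS, hUnion, hDisj, hEA, hEB, he₁, he₂,
      hFA, ⟨i, ⟨hi1, hik⟩, hFB⟩, hE'⟩ := hF
    have hu := hfree u huVS
    have hAsub : A ⊆ VS \ {u} := hUnion ▸ Set.subset_union_left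
    have hBsub : Bs ⊆ VS \ {u} := hUnion ▸ Set.subset_union_right
    -- edge conditions for the two components after Maker claims u
    have hedgeA : ∀ e ∈ EA, ∃ f ∈ E, f \ (insert u M) ⊆ e := by
      intro e he
      by_cases h1 : e = e₁
      · subst h1
        obtain ⟨f, hf, hsub⟩ := hedge (insert u e) (by rw [hE']; right; left; rfl)
        refine ⟨f, hf, fun a ha => ?_⟩
        simp only [Finset.mem_sdiff, Finset.mem_insert, not_or] at ha
        have := hsub (Finset.mem_sdiff.2 ⟨ha.1, ha.2.2⟩)
        simp only [Finset.mem_insert] at this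
        tauto
      · obtain ⟨f, hf, hsub⟩ := hedge e (by rw [hE']; left; left; exact ⟨he, h1⟩)
        refine ⟨f, hf, fun a ha => hsub ?_⟩
        simp only [Finset.mem_sdiff, Finset.mem_insert, not_or] at ha ⊢
        tauto
    have hedgeB : ∀ e ∈ EB, ∃ f ∈ E, f \ (insert u M) ⊆ e := by
      intro e he
      by_cases h1 : e = e₂
      · subst h1
        obtain ⟨f, hf, hsub⟩ := hedge (insert u e) (by rw [hE']; right; right; rfl)
        refine ⟨f, hf, fun a ha => ?_⟩
        simp only [Finset.mem_sdiff, Finset.mem_insert, not_or] at ha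
        have := hsub (Finset.mem_sdiff.2 ⟨ha.1, ha.2.2⟩)
        simp only [Finset.mem_insert] at this
        tauto
      · obtain ⟨f, hf, hsub⟩ := hedge e (by rw [hE']; left; right; exact ⟨he, h1⟩)
        refine ⟨f, hf, fun a ha => hsub ?_⟩
        simp only [Finset.mem_sdiff, Finset.mem_insert, not_or] at ha ⊢
        tauto
    have key : mbVal E false (insert u M) B ≤ ((k + 1 : ℕ) : ℕ∞) := by
      rw [mbVal]
      split
      · exact zero_le
      · split
        · -- board full: contradiction, A is nonempty and unclaimed
          exfalso
          obtain ⟨a, haA⟩ := FStar_nonempty hFA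
          have haVS := hAsub haA
          have hfa := hfree a haVS.1
          have : a ∈ Finset.univ \ ((insert u M) ∪ B) := by
            simp only [Finset.mem_sdiff, Finset.mem_univ, true_and, Finset.mem_union,
              Finset.mem_insert, not_or]
            exact ⟨⟨haVS.2, hfa.1⟩, hfa.2⟩
          simp_all
        · apply iSup₂_le
          intro v hv
          simp only [Finset.mem_sdiff, Finset.mem_univ, true_and, Finset.mem_union,
            Finset.mem_insert, not_or] at hv
          by_cases hvA : v ∈ A
          · -- recurse on the Bs component
            have hvB : v ∉ Bs := fun hvB => (hDisj.ne_of_mem hvA hvB) rfl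
            refine le_trans (IH i (by omega) Bs EB (insert u M) (insert v B) hFB ?_ hedgeB) ?_
            · intro w hw
              have hwVS := hBsub hw
              have hfw := hfree w hwVS.1
              refine ⟨?_, ?_⟩
              · simp only [Finset.mem_insert, not_or]
                exact ⟨hwVS.2, hfw.1⟩
              · simp only [Finset.mem_insert, not_or]
                exact ⟨fun h => hvB (h ▸ hw), hfw.2⟩
            · exact_mod_cast Nat.cast_le.2 hik
          · -- recurse on the A component
            refine IH (k+1) (by omega) A EA (insert u M) (insert v B) hFA ?_ hedgeA
            intro w hw
            have hwVS := hAsub hw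
            have hfw := hfree w hwVS.1
            refine ⟨?_, ?_⟩
            · simp only [Finset.mem_insert, not_or]
              exact ⟨hwVS.2, hfw.1⟩
            · simp only [Finset.mem_insert, not_or]
              exact ⟨fun h => hvA (h ▸ hw), hfw.2⟩
    rw [mbVal]
    split
    · exact zero_le
    · refine le_trans (iInf₂_le u ?_) ?_
      · simp [hu.1, hu.2]
      · calc 1 + mbVal E false (insert u M) B ≤ 1 + ((k+1 : ℕ) : ℕ∞) := add_le_add le_rfl key
          _ = ((k + 2 : ℕ) : ℕ∞) := by push_cast; ring

end Aux


/-- If a hypergraph `H` (with vertex type `W` and edge set `E`) contains a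
subhypergraph belonging to the family `F_k`, then Maker, moving first, wins the
Maker–Breaker game on `H` in at most `k` of his moves: `w_M^M(H) ≤ k`. -/
theorem stmt_9 {W : Type} [Fintype W] (E : Set (Finset W)) (k : ℕ) (hk : 1 ≤ k)
    (h : ∃ (VS : Set W) (E' : Set (Finset W)), E' ⊆ E ∧ FFamilyAt k VS E') :
    mbVal E true ∅ ∅ ≤ (k : ℕ∞) := by
  obtain ⟨VS, E', hsub, hF, -⟩ := h
  refine mbVal_le_of_FStar E k VS E' ∅ ∅ hF (by simp) ?_
  intro e he
  exact ⟨e, hsub he, by simp⟩
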